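/- For any subset J of candidates and any natural number ℓ with ℓ ≤ min(n, m_J), if y_J > ℓ·q then every execution of the Eneström–Phragmén procedure satisfies n_{J*} ≥ ℓ. -/
import Mathlib


/-!
The Eneström–Phragmén procedure.

We fix a number of seats `n ≥ 1`, a finite set `ι` of candidates with capacities
`m i ∈ ℕ∞`, a finite set `κ` of vote types, and for each vote type a positive weight
`v k` and a nonempty approval set `A k`.  The total vote is `V = ∑ k, v k` and the
(Droop) quota is `q = V / (n + 1)`.  An execution of the procedure is recorded by the
vote weights `vk s k` at each step `s`, the seat counts `seats s i`, and the candidate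
`winner s` receiving seat `s + 1` (for `s < n`), subject to the rules of the procedure.
-/

namespace EP

/-- The data of an Eneström–Phragmén election. -/
structure Input (ι κ : Type*) [Fintype ι] [DecidableEq ι] [Fintype κ] : Type _ where
  /-- number of seats -/
  n : ℕ
  hn : 1 ≤ n
  /-- capacities of the candidates -/
  m : ι → ℕ∞
  /-- weights of the vote types -/
  v : κ → ℝ
  hv : ∀ k, 0 < v k
  /-- approval sets of the vote types -/
  A : κ → Finset ι
  hA : ∀ k, (A k).Nonempty

namespace Input

variable {ι κ : Type*} [Fintype ι] [DecidableEq ι] [Fintype κ] (P : Input ι κ)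

/-- Total number of votes. -/
noncomputable def V : ℝ := ∑ k, P.v k

/-- The Droop quota `q = v / (n + 1)`. -/
noncomputable def q : ℝ := P.V / (P.n + 1)

/-- Support of candidate `i` given current vote weights `u`:
`w_i = ∑_{k : i ∈ A_k} u_k`. -/
noncomputable def supp (u : κ → ℝ) (i : ι) : ℝ :=
  ∑ k ∈ Finset.univ.filter (fun k => i ∈ P.A k), u k

/-- Standing assumption: at least `n` candidates have positive initial support. -/
def enough : Prop := P.n ≤ {i : ι | 0 < P.supp P.v i}.ncard

end Input

/-- An execution of the Eneström–Phragmén procedure: at each step `s < n`,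
seat `s + 1` is given to an eligible candidate `winner s` of maximal support, and the
votes approving the winner are reduced according to the quota rule. -/
structure Exec {ι κ : Type*} [Fintype ι] [DecidableEq ι] [Fintype κ]
    (P : Input ι κ) : Type _ where
  /-- the vote weights `v_k[s]` -/
  vk : ℕ → κ → ℝ
  /-- the seat counts `n_i[s]` -/
  seats : ℕ → ι → ℕ
  /-- the candidate receiving seat `s + 1` -/
  winner : ℕ → ι
  vk_init : vk 0 = P.v
  seats_init : ∀ i, seats 0 i = 0
  /-- the winner is eligible -/
  winner_elig : ∀ s < P.n, (seats s (winner s) : ℕ∞) < P.m (winner s)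
  /-- the winner maximizes the support among eligible candidates -/
  winner_max : ∀ s < P.n, ∀ i : ι, (seats s i : ℕ∞) < P.m i →
    P.supp (vk s) i ≤ P.supp (vk s) (winner s)
  seats_succ : ∀ s < P.n, ∀ i : ι,
    seats (s + 1) i = if i = winner s then seats s i + 1 else seats s i
  /-- vote reduction when the winner has at least a quota -/
  vk_succ_ge : ∀ s < P.n, ∀ k, winner s ∈ P.A k → P.q ≤ P.supp (vk s) (winner s) →
    vk (s + 1) k = (1 - P.q / P.supp (vk s) (winner s)) * vk s k
  /-- vote exhaustion when the winner has less than a quota -/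
  vk_succ_lt : ∀ s < P.n, ∀ k, winner s ∈ P.A k → P.supp (vk s) (winner s) < P.q →
    vk (s + 1) k = 0
  /-- votes not approving the winner are unchanged -/
  vk_succ_out : ∀ s < P.n, ∀ k, winner s ∉ P.A k → vk (s + 1) k = vk s k

end EP

open EP in
/-- Theorem 2 of the paper: for any subset `J` of candidates and any
`ℓ ≤ min (n, m_J)`, if `y_J > ℓ q` then every execution gives `n_{J*} ≥ ℓ`, where
`y_J` is the total weight of the votes approving all of `J` and
`J* = ⋃ {A_k : A_k ⊇ J}`. -/
theorem enestrom_phragmen_pjr_proportionality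
    {ι κ : Type*} [Fintype ι] [DecidableEq ι] [Fintype κ]
    (P : Input ι κ) (henough : P.enough)
    (J : Finset ι) (ℓ : ℕ) (hℓn : ℓ ≤ P.n) (hℓm : (ℓ : ℕ∞) ≤ ∑ i ∈ J, P.m i)
    (hyJ : (ℓ : ℝ) * P.q < ∑ k ∈ Finset.univ.filter (fun k => J ⊆ P.A k), P.v k)
    (E : Exec P) :
    ℓ ≤ ∑ i ∈ Finset.univ.filter (fun i => ∃ k, J ⊆ P.A k ∧ i ∈ P.A k),
        E.seats P.n i := by
  by_contra hcon
  push_neg at hcon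
  set Kf := Finset.univ.filter (fun k => J ⊆ P.A k) with hKf
  set Jstar := Finset.univ.filter (fun i : ι => ∃ k, J ⊆ P.A k ∧ i ∈ P.A k) with hJstar
  set yJ := ∑ k ∈ Kf, P.v k with hyJdef
  have hq0 : 0 ≤ P.q := by
    have hV : 0 ≤ P.V := Finset.sum_nonneg fun k _ => (P.hv k).le
    have hn1 : (0:ℝ) < (P.n : ℝ) + 1 := by positivity
    exact div_nonneg hV hn1.le
  have hyJ0 : 0 < yJ := lt_of_le_of_lt (mul_nonneg (Nat.cast_nonneg ℓ) hq0) hyJ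
  obtain ⟨k0, hk0⟩ : Kf.Nonempty := Finset.nonempty_of_sum_ne_zero (by
    rw [← hyJdef]; exact ne_of_gt hyJ0)
  have hk0J : J ⊆ P.A k0 := (Finset.mem_filter.1 hk0).2
  have hJsub : J ⊆ Jstar := fun i hi =>
    Finset.mem_filter.2 ⟨Finset.mem_univ _, k0, hk0J, hk0J hi⟩
  -- evolution of seats within Jstar
  have hts : ∀ s < P.n, ∑ i ∈ Jstar, E.seats (s+1) i
      = (∑ i ∈ Jstar, E.seats s i) + (if E.winner s ∈ Jstar then 1 else 0) := by
    intro s hs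
    have hterm : ∀ i ∈ Jstar,
        E.seats (s+1) i = E.seats s i + (if i = E.winner s then 1 else 0) := by
      intro i _
      rw [E.seats_succ s hs i]
      split <;> simp
    rw [Finset.sum_congr rfl hterm, Finset.sum_add_distrib,
      Finset.sum_ite_eq' Jstar (E.winner s) (fun _ => 1)]
  have htmono : ∀ a b : ℕ, a ≤ b → b ≤ P.n →
      ∑ i ∈ Jstar, E.seats a i ≤ ∑ i ∈ Jstar, E.seats b i := by
    intro a b hab hbn
    induction b with
    | zero => simp [Nat.le_zero.mp hab]
    | succ b ih =>
      rcases Nat.lt_succ_iff_lt_or_eq.mp (Nat.lt_succ_of_le hab) with h | h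
      · have h1 := ih (Nat.lt_succ_iff.mp h) (le_of_lt hbn)
        rw [hts b hbn]
        split <;> omega
      · rw [h]
  -- the main invariant
  have main : ∀ s, s ≤ P.n →
      (∀ k, 0 ≤ E.vk s k) ∧
      (yJ - (∑ i ∈ Jstar, E.seats s i : ℕ) * P.q ≤ ∑ k ∈ Kf, E.vk s k) ∧
      (∑ k, E.vk s k ≤ P.V - s * P.q) := by
    intro s hsn
    induction s with
    | zero =>
      refine ⟨fun k => by rw [E.vk_init]; exact (P.hv k).le, ?_, ?_⟩
      · simp only [E.vk_init, E.seats_init, Finset.sum_const_zero, Nat.cast_zero,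
          zero_mul, sub_zero]
        rw [← hyJdef]
      · simp [E.vk_init, Input.V]
    | succ s ih =>
      have hs : s < P.n := hsn
      obtain ⟨hnn, hY, hM⟩ := ih hs.le
      have hts_lt : ∑ i ∈ Jstar, E.seats s i < ℓ :=
        lt_of_le_of_lt (htmono s P.n hs.le le_rfl) hcon
      -- there is an eligible candidate in J
      have hJle : ∑ i ∈ J, E.seats s i ≤ ∑ i ∈ Jstar, E.seats s i :=
        Finset.sum_le_sum_of_subset hJsub
      obtain ⟨i0, hi0J, hi0m⟩ : ∃ i ∈ J, (E.seats s i : ℕ∞) < P.m i := by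
        by_contra h
        push_neg at h
        have h1 : (ℓ : ℕ∞) ≤ ∑ i ∈ J, (E.seats s i : ℕ∞) :=
          le_trans hℓm (Finset.sum_le_sum fun i hi => h i hi)
        rw [← Nat.cast_sum] at h1
        have h2 : ℓ ≤ ∑ i ∈ J, E.seats s i := by exact_mod_cast h1
        omega
      -- the support of the winner exceeds the quota
      set w := P.supp (E.vk s) (E.winner s) with hwdef
      have hKsub : Kf ⊆ Finset.univ.filter (fun k => i0 ∈ P.A k) := by
        intro k hk
        simp only [hKf, Finset.mem_filter] at hk ⊢
        exact ⟨hk.1, hk.2 hi0J⟩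
      have hYsupp : (∑ k ∈ Kf, E.vk s k) ≤ P.supp (E.vk s) i0 :=
        Finset.sum_le_sum_of_subset_of_nonneg hKsub (fun k _ _ => hnn k)
      have hYw : (∑ k ∈ Kf, E.vk s k) ≤ w := hYsupp.trans (E.winner_max s hs i0 hi0m)
      have hcast : ((∑ i ∈ Jstar, E.seats s i : ℕ) : ℝ) + 1 ≤ (ℓ : ℝ) := by
        exact_mod_cast hts_lt
      have hqw : P.q < w := by
        nlinarith [mul_nonneg hq0
          (by linarith : (0:ℝ) ≤ (ℓ:ℝ) - ((∑ i ∈ Jstar, E.seats s i : ℕ):ℝ) - 1)]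
      have hw0 : 0 < w := lt_of_le_of_lt hq0 hqw
      have hupd : ∀ k, E.winner s ∈ P.A k →
          E.vk (s+1) k = (1 - P.q / w) * E.vk s k :=
        fun k hk => E.vk_succ_ge s hs k hk hqw.le
      have hout : ∀ k, E.winner s ∉ P.A k → E.vk (s+1) k = E.vk s k :=
        fun k hk => E.vk_succ_out s hs k hk
      have hc0 : 0 ≤ 1 - P.q / w := by
        have h1 : P.q / w ≤ 1 := (div_le_one hw0).2 hqw.le
        linarith
      have hnn1 : ∀ k, 0 ≤ E.vk (s+1) k := by
        intro k
        by_cases hk : E.winner s ∈ P.A k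
        · rw [hupd k hk]; exact mul_nonneg hc0 (hnn k)
        · rw [hout k hk]; exact hnn k
      set Pw := Finset.univ.filter (fun k => E.winner s ∈ P.A k) with hPw
      have hwsum : w = ∑ k ∈ Pw, E.vk s k := by
        rw [hwdef, hPw]; rfl
      have hdq : (P.q / w) * w = P.q := div_mul_cancel₀ _ hw0.ne'
      -- total mass decreases by exactly q
      have hMsucc : ∑ k, E.vk (s+1) k = (∑ k, E.vk s k) - P.q := by
        rw [← Finset.sum_filter_add_sum_filter_not Finset.univ
            (fun k => E.winner s ∈ P.A k) (E.vk (s+1)),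
          ← Finset.sum_filter_add_sum_filter_not Finset.univ
            (fun k => E.winner s ∈ P.A k) (E.vk s)]
        have h1 : ∑ k ∈ Pw, E.vk (s+1) k = (1 - P.q / w) * ∑ k ∈ Pw, E.vk s k := by
          rw [Finset.mul_sum]
          exact Finset.sum_congr rfl fun k hk => hupd k (Finset.mem_filter.1 hk).2
        have h2 : ∑ k ∈ Finset.univ.filter (fun k => ¬ E.winner s ∈ P.A k), E.vk (s+1) k
            = ∑ k ∈ Finset.univ.filter (fun k => ¬ E.winner s ∈ P.A k), E.vk s k :=
          Finset.sum_congr rfl fun k hk => hout k (Finset.mem_filter.1 hk).2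
        rw [h1, h2, ← hwsum]
        have h3 : (1 - P.q / w) * w = w - P.q := by
          field_simp
        linarith
      -- the J-vote mass decreases by at most q, and only if the winner is in Jstar
      have hY1 : yJ - ((∑ i ∈ Jstar, E.seats (s+1) i : ℕ):ℝ) * P.q
          ≤ ∑ k ∈ Kf, E.vk (s+1) k := by
        rw [hts s hs]
        have e1 : ∑ k ∈ Kf, E.vk (s+1) k
            = (1 - P.q / w) * (∑ k ∈ Kf.filter (fun k => E.winner s ∈ P.A k), E.vk s k)
              + ∑ k ∈ Kf.filter (fun k => ¬ E.winner s ∈ P.A k), E.vk s k := by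
          rw [← Finset.sum_filter_add_sum_filter_not Kf
              (fun k => E.winner s ∈ P.A k) (E.vk (s+1)), Finset.mul_sum]
          congr 1
          · exact Finset.sum_congr rfl fun k hk => hupd k (Finset.mem_filter.1 hk).2
          · exact Finset.sum_congr rfl fun k hk => hout k (Finset.mem_filter.1 hk).2
        have e2 : ∑ k ∈ Kf, E.vk s k
            = (∑ k ∈ Kf.filter (fun k => E.winner s ∈ P.A k), E.vk s k)
              + ∑ k ∈ Kf.filter (fun k => ¬ E.winner s ∈ P.A k), E.vk s k :=
          (Finset.sum_filter_add_sum_filter_not Kf _ _).symm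
        by_cases hwJ : E.winner s ∈ Jstar
        · simp only [hwJ, if_true]
          have hsub2 : Kf.filter (fun k => E.winner s ∈ P.A k) ⊆ Pw := by
            intro k hk
            simp only [hPw, Finset.mem_filter, Finset.mem_univ, true_and]
            exact (Finset.mem_filter.1 hk).2
          have hble : ∑ k ∈ Kf.filter (fun k => E.winner s ∈ P.A k), E.vk s k ≤ w := by
            rw [hwsum]
            exact Finset.sum_le_sum_of_subset_of_nonneg hsub2 (fun k _ _ => hnn k)
          have hqw0 : 0 ≤ P.q / w := div_nonneg hq0 hw0.le
          have h4 : (P.q / w) * (∑ k ∈ Kf.filter (fun k => E.winner s ∈ P.A k), E.vk s k)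
              ≤ (P.q / w) * w := mul_le_mul_of_nonneg_left hble hqw0
          have h5 : (1 - P.q / w) * (∑ k ∈ Kf.filter (fun k => E.winner s ∈ P.A k), E.vk s k)
              = (∑ k ∈ Kf.filter (fun k => E.winner s ∈ P.A k), E.vk s k)
                - (P.q / w) * (∑ k ∈ Kf.filter (fun k => E.winner s ∈ P.A k), E.vk s k) := by
            ring
          rw [Nat.cast_add, Nat.cast_one, e1]
          rw [e2] at hY
          linarith
        · have hKfe : ∀ k ∈ Kf, ¬ E.winner s ∈ P.A k := by
            intro k hk hwk
            exact hwJ (Finset.mem_filter.2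
              ⟨Finset.mem_univ _, k, (Finset.mem_filter.1 hk).2, hwk⟩)
          have e3 : ∑ k ∈ Kf, E.vk (s+1) k = ∑ k ∈ Kf, E.vk s k :=
            Finset.sum_congr rfl fun k hk => hout k (hKfe k hk)
          simp only [hwJ, if_false]
          rw [Nat.cast_add, Nat.cast_zero, add_zero, e3]
          linarith
      refine ⟨hnn1, hY1, ?_⟩
      rw [hMsucc]
      push_cast
      linarith
  obtain ⟨hnnN, hYN, hMN⟩ := main P.n le_rfl
  have hYM : ∑ k ∈ Kf, E.vk P.n k ≤ ∑ k, E.vk P.n k := by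
    refine Finset.sum_le_sum_of_subset_of_nonneg ?_ (fun k _ _ => hnnN k)
    rw [hKf]; exact Finset.filter_subset _ _
  have hVq : P.V = ((P.n : ℝ) + 1) * P.q := by
    rw [Input.q]
    field_simp
  have htn : ((∑ i ∈ Jstar, E.seats P.n i : ℕ) : ℝ) + 1 ≤ (ℓ : ℝ) := by
    exact_mod_cast hcon
  nlinarith [mul_nonneg hq0
    (by linarith : (0:ℝ) ≤ (ℓ:ℝ) - ((∑ i ∈ Jstar, E.seats P.n i : ℕ):ℝ) - 1)]
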